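/- For the map f(x,y) = (x², y², x³+y³+xy) with presentation matrix Λ_f as above, the determinant of Λ_f equals (up to sign) X₁²X₂² − 2X₁X₂Y² + Y⁴ − 2X₁⁴X₂ − 2X₁X₂⁴ − 8X₁²X₂²Y − 2X₁³Y² − 2X₂³Y² + X₁⁶ − 2X₁³X₂³ + X₂⁶, and substituting X₁ = x², X₂ = y², Y = x³+y³+xy makes this polynomial vanish identically in ℂ[x,y]. -/

import Mathlib

open MvPolynomial

/-- The presentation matrix `Λ_f` for `f(x,y) = (x², y², x³+y³+xy)`,
over `ℂ[X₁,X₂,Y]` (variables `0 ↦ X₁`, `1 ↦ X₂`, `2 ↦ Y`). -/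
noncomputable def LambdaF : Matrix (Fin 4) (Fin 4) (MvPolynomial (Fin 3) ℂ) :=
  !![X 2, -(X 0), -(X 1), -1;
     -(X 1 * X 2) - X 0 ^ 2, X 2 + X 0 * X 1, X 1 ^ 2 - X 0, 0;
     -(X 1 ^ 2) - X 0 * X 2, -(X 1) + X 0 ^ 2, X 2 + X 0 * X 1, 0;
     -(X 0 * X 1), -(X 1 ^ 2), -(X 0 ^ 2), X 2]

/-- The polynomial generating the zeroth Fitting ideal of `f`. -/
noncomputable def PF : MvPolynomial (Fin 3) ℂ :=
  X 0 ^ 2 * X 1 ^ 2 - 2 * (X 0 * X 1 * X 2 ^ 2) + X 2 ^ 4 - 2 * (X 0 ^ 4 * X 1)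
    - 2 * (X 0 * X 1 ^ 4) - 8 * (X 0 ^ 2 * X 1 ^ 2 * X 2) - 2 * (X 0 ^ 3 * X 2 ^ 2)
    - 2 * (X 1 ^ 3 * X 2 ^ 2) + X 0 ^ 6 - 2 * (X 0 ^ 3 * X 1 ^ 3) + X 1 ^ 6

set_option maxHeartbeats 4000000 in
/-- `det Λ_f = ±P`, and substituting `X₁ = x²`, `X₂ = y²`, `Y = x³+y³+xy` makes
`P` vanish identically, i.e. `P` cuts out the image of `f`. -/
theorem detLambdaF :
    (LambdaF.det = PF ∨ LambdaF.det = -PF) ∧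
    MvPolynomial.aeval
      ![(X 0 : MvPolynomial (Fin 2) ℂ) ^ 2, X 1 ^ 2, X 0 ^ 3 + X 1 ^ 3 + X 0 * X 1] PF = 0 := by
  constructor
  · left
    rw [LambdaF, PF]
    simp [Matrix.det_succ_row_zero, Fin.sum_univ_succ, Fin.succAbove, Fin.castSucc, Fin.castAdd, Fin.castLE]
    ring
  · rw [PF]
    simp only [map_add, map_sub, map_mul, map_pow, map_ofNat, aeval_X]
    simp only [Matrix.cons_val_zero, Matrix.cons_val_one, Matrix.head_cons,
      Matrix.cons_val_two, Matrix.tail_cons]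
    ring
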